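/- Let ν be a limit ordinal. The poset P_ν of finite partial functions p : ν × ν ⇀ 2 satisfying (i) p(α,α) = 1 whenever (α,α) ∈ dom(p) and (ii) α ≤ β whenever p(α,β) = 1, ordered by reverse inclusion, satisfies the countable chain condition: every antichain in P_ν is countable. -/

import Mathlib

/-- A condition in the poset `P_ν`. -/
def IsCondition (ν : Ordinal) (p : Ordinal × Ordinal → Option Bool) : Prop :=
  {x | p x ≠ none}.Finite ∧
  (∀ x, p x ≠ none → x.1 < ν ∧ x.2 < ν) ∧
  (∀ α, p (α, α) ≠ none → p (α, α) = some true) ∧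
  (∀ α β, p (α, β) = some true → α ≤ β)

/-- `q` extends `p` in the forcing order. -/
def CondExtends (q p : Ordinal × Ordinal → Option Bool) : Prop :=
  ∀ x, p x ≠ none → q x = p x

/-- Key combinatorial lemma: a family of finite partial functions (domains of
size at most `n`) that pairwise conflict somewhere is countable. -/
lemma conflict_countable {X : Type*} : ∀ (n : ℕ) (A : Set (X → Option Bool)),
    (∀ p ∈ A, {x | p x ≠ none}.Finite ∧ {x | p x ≠ none}.ncard ≤ n) →
    (∀ p ∈ A, ∀ q ∈ A, p ≠ q → ∃ x, p x ≠ none ∧ q x ≠ none ∧ p x ≠ q x) →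
    A.Countable := by
  intro n
  classical
  induction n with
  | zero =>
    intro A hdom hconf
    apply Set.Subsingleton.countable
    intro p hp q hq
    by_contra hne
    obtain ⟨x, hpx, hqx, _⟩ := hconf p hp q hq hne
    obtain ⟨hfin, hcard⟩ := hdom p hp
    have : {x | p x ≠ none} = ∅ := by
      have := Set.ncard_eq_zero hfin |>.mp (Nat.le_zero.mp hcard)
      exact this
    exact (Set.eq_empty_iff_forall_notMem.mp this x) hpx
  | succ n ih =>
    intro A hdom hconf
    by_contra hA
    -- each slice `A' x b` is countable
    have hslice : ∀ (x : X) (b : Bool), {p ∈ A | p x = some b}.Countable := by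
      intro x b
      set A' : Set (X → Option Bool) := {p ∈ A | p x = some b} with hA'
      set r : (X → Option Bool) → (X → Option Bool) := fun p => Function.update p x none
        with hr
      have hinj : Set.InjOn r A' := by
        intro p hp q hq hrpq
        funext y
        by_cases hy : y = x
        · subst hy; rw [hp.2, hq.2]
        · have := congrFun hrpq y
          simpa [hr, Function.update_of_ne hy] using this
      apply Set.countable_of_injective_of_countable_image hinj
      apply ih
      · rintro _ ⟨p, hp, rfl⟩
        have hx : x ∈ {y | p y ≠ none} := by simp [hp.2]
        obtain ⟨hfin, hcard⟩ := hdom p hp.1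
        have hset : {y | r p y ≠ none} = {y | p y ≠ none} \ {x} := by
          ext y
          by_cases hy : y = x <;> simp [hr, hy, Function.update_of_ne]
        constructor
        · rw [hset]; exact hfin.diff
        · rw [hset, Set.ncard_diff_singleton_of_mem hx]
          omega
      · rintro _ ⟨p, hp, rfl⟩ _ ⟨q, hq, rfl⟩ hne
        have hpq : p ≠ q := fun h => hne (by rw [h])
        obtain ⟨y, hpy, hqy, hd⟩ := hconf p hp.1 q hq.1 hpq
        have hyx : y ≠ x := by
          intro h; subst h; rw [hp.2, hq.2] at hd; exact hd rfl
        exact ⟨y, by simpa [hr, Function.update_of_ne hyx] using hpy,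
          by simpa [hr, Function.update_of_ne hyx] using hqy,
          by simpa [hr, Function.update_of_ne hyx] using hd⟩
    -- A is covered by {p₀} and finitely many slices
    have hne : A.Nonempty := by
      rcases A.eq_empty_or_nonempty with h | h
      · exact absurd (h ▸ Set.countable_empty) hA
      · exact h
    obtain ⟨p₀, hp₀⟩ := hne
    obtain ⟨hfin₀, _⟩ := hdom p₀ hp₀
    have hcover : A ⊆ {p₀} ∪ ⋃ x ∈ {y | p₀ y ≠ none}, ⋃ b : Bool, {p ∈ A | p x = some b} := by
      intro p hp
      by_cases hpp : p = p₀
      · exact Or.inl hpp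
      · obtain ⟨x, hpx, hp₀x, hd⟩ := hconf p hp p₀ hp₀ hpp
        right
        obtain ⟨b, hb⟩ := Option.ne_none_iff_exists'.mp hpx
        exact Set.mem_biUnion hp₀x (Set.mem_iUnion.mpr ⟨b, hp, hb⟩)
    exact hA <| Set.Countable.mono hcover <|
      (Set.countable_singleton p₀).union <|
        Set.Countable.biUnion hfin₀.countable fun x _ =>
          Set.countable_iUnion fun b => hslice x b

theorem Pnu_ccc (ν : Ordinal) (hν : Order.IsSuccLimit ν)
    (A : Set (Ordinal × Ordinal → Option Bool))
    (hA : ∀ p ∈ A, IsCondition ν p)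
    (hanti : ∀ p ∈ A, ∀ q ∈ A, p ≠ q →
      ¬ ∃ r, IsCondition ν r ∧ CondExtends r p ∧ CondExtends r q) :
    A.Countable := by
  -- incompatible conditions must disagree somewhere
  have hconf : ∀ p ∈ A, ∀ q ∈ A, p ≠ q → ∃ x, p x ≠ none ∧ q x ≠ none ∧ p x ≠ q x := by
    intro p hp q hq hne
    by_contra h
    push_neg at h
    apply hanti p hp q hq hne
    refine ⟨fun x => if p x = none then q x else p x, ?_, ?_, ?_⟩
    · obtain ⟨hpf, hpb, hpd, hpo⟩ := hA p hp
      obtain ⟨hqf, hqb, hqd, hqo⟩ := hA q hq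
      refine ⟨?_, ?_, ?_, ?_⟩
      · apply (hpf.union hqf).subset
        intro x hx
        simp only [Set.mem_setOf_eq] at hx
        by_cases hpx : p x = none
        · right; simpa [hpx] using hx
        · left; exact hpx
      · intro x hx
        by_cases hpx : p x = none
        · exact hqb x (by simpa [hpx] using hx)
        · exact hpb x hpx
      · intro α hα
        by_cases hpx : p (α, α) = none
        · simp only [hpx, if_pos] at hα ⊢; exact hqd α hα
        · simp only [hpx, if_neg, if_false] at hα ⊢
          simpa [hpx] using hpd α hpx
      · intro α β hαβ
        by_cases hpx : p (α, β) = none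
        · simp only [hpx, if_pos] at hαβ; exact hqo α β hαβ
        · simp only [hpx, if_neg, if_false] at hαβ
          exact hpo α β (by simpa [hpx] using hαβ)
    · intro x hx; simp [hx]
    · intro x hx
      by_cases hpx : p x = none
      · simp [hpx]
      · have := h x hpx hx
        simp [hpx, this]
  -- decompose A by domain size
  have hdecomp : A = ⋃ n : ℕ, {p ∈ A | {x | p x ≠ none}.ncard ≤ n} := by
    ext p
    simp only [Set.mem_iUnion, Set.mem_setOf_eq]
    exact ⟨fun hp => ⟨{x | p x ≠ none}.ncard, hp, le_rfl⟩, fun ⟨n, hp, _⟩ => hp⟩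
  rw [hdecomp]
  apply Set.countable_iUnion
  intro n
  apply conflict_countable n
  · exact fun p hp => ⟨(hA p hp.1).1, hp.2⟩
  · exact fun p hp q hq hne => hconf p hp.1 q hq.1 hne
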